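/- Let n ≥ 1, α ∈ (0, 2), and let f : ℝⁿ → ℝ be C¹. Then for every x ∈ ℝⁿ and every z ∈ ℝⁿ with z ≠ 0, writing θ = z/|z|, one has |f(x+z) − f(x) − ∇f(x)·z| ≤ (2+α)^{−1/2} |z|^{1+α/2} ( ∫₀^{|z|} |∇f(x + rθ) − ∇f(x)|² r^{−(1+α)} dr )^{1/2}, where the right-hand side is interpreted as +∞ if the integral diverges. -/

import Mathlib

open MeasureTheory
open scoped RealInnerProductSpace

/-- Cauchy–Schwarz bound of the first-order Taylor remainder by the radial part of the
dissipation: `|δ_z f(x) − ∇f(x)·z| ≤ (2+α)^{-1/2} |z|^{1+α/2} D_α(∇f)(x,θ)^{1/2}`,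
with the right-hand side `+∞` if the radial integral diverges. -/
theorem stmt10 (n : ℕ) (hn : 1 ≤ n) (α : ℝ) (hα0 : 0 < α) (hα2 : α < 2)
    (f : EuclideanSpace ℝ (Fin n) → ℝ) (hf : ContDiff ℝ 1 f)
    (x z : EuclideanSpace ℝ (Fin n)) (hz : z ≠ 0) :
    ENNReal.ofReal |f (x + z) - f x - ⟪gradient f x, z⟫| ≤
      ENNReal.ofReal ((2 + α) ^ (-(1 / 2 : ℝ)) * ‖z‖ ^ (1 + α / 2)) *
        (∫⁻ r in Set.Ioc (0 : ℝ) ‖z‖,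
            ENNReal.ofReal
              (‖gradient f (x + r • (‖z‖⁻¹ • z)) - gradient f x‖ ^ 2 *
                r ^ (-(1 + α)))) ^ (1 / 2 : ℝ) := by
  set L : ℝ := ‖z‖ with hL
  have hL0 : 0 < L := norm_pos_iff.mpr hz
  set θ : EuclideanSpace ℝ (Fin n) := ‖z‖⁻¹ • z with hθ
  have hθ1 : ‖θ‖ = 1 := norm_smul_inv_norm hz
  have hLθ : L • θ = z := smul_inv_smul₀ (by positivity) z
  have hdf : Differentiable ℝ f := hf.differentiable one_ne_zero
  have hgradcont : Continuous (gradient f) := by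
    have h1 : Continuous (fderiv ℝ f) := hf.continuous_fderiv one_ne_zero
    exact (InnerProductSpace.toDual ℝ _).symm.continuous.comp h1
  have hginner : ∀ y v, ⟪gradient f y, v⟫ = fderiv ℝ f y v := by
    intro y v
    rw [gradient]
    exact InnerProductSpace.toDual_symm_apply
  have hderiv : ∀ t : ℝ, HasDerivAt (fun t => f (x + t • θ))
      (⟪gradient f (x + t • θ), θ⟫) t := by
    intro t
    have hline : HasDerivAt (fun t : ℝ => x + t • θ) θ t := by
      simpa using ((hasDerivAt_id t).smul_const θ).const_add x
    have := ((hdf (x + t • θ)).hasFDerivAt).comp_hasDerivAt t hline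
    rw [hginner]; exact this
  have hcont : Continuous (fun r : ℝ => ⟪gradient f (x + r • θ), θ⟫) := by
    exact Continuous.inner (hgradcont.comp (continuous_const.add
      (continuous_id.smul continuous_const))) continuous_const
  have hftc : ∫ r in (0:ℝ)..L, ⟪gradient f (x + r • θ), θ⟫
      = f (x + z) - f x := by
    rw [intervalIntegral.integral_eq_sub_of_hasDerivAt (fun t _ => hderiv t)
      (hcont.intervalIntegrable 0 L)]
    simp [hLθ]
  set H : ℝ → ℝ := fun r => ‖gradient f (x + r • θ) - gradient f x‖ with hH
  have hHcont : Continuous H := by fun_prop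
  have hcont2 : Continuous (fun r : ℝ => ⟪gradient f (x + r • θ) - gradient f x, θ⟫) := by
    exact Continuous.inner ((hgradcont.comp (continuous_const.add
      (continuous_id.smul continuous_const))).sub continuous_const) continuous_const
  have hrem : f (x + z) - f x - ⟪gradient f x, z⟫
      = ∫ r in (0:ℝ)..L, ⟪gradient f (x + r • θ) - gradient f x, θ⟫ := by
    have hz' : ⟪gradient f x, z⟫ = L * ⟪gradient f x, θ⟫ := by
      rw [← hLθ, inner_smul_right]
    simp only [inner_sub_left]
    rw [intervalIntegral.integral_sub (hcont.intervalIntegrable 0 L)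
      intervalIntegrable_const, intervalIntegral.integral_const, hftc, hz']
    simp [smul_eq_mul]
  have hbound : |f (x + z) - f x - ⟪gradient f x, z⟫| ≤ ∫ r in (0:ℝ)..L, H r := by
    rw [hrem]
    calc |∫ r in (0:ℝ)..L, ⟪gradient f (x + r • θ) - gradient f x, θ⟫|
        ≤ ∫ r in (0:ℝ)..L, |⟪gradient f (x + r • θ) - gradient f x, θ⟫| :=
          intervalIntegral.abs_integral_le_integral_abs hL0.le
      _ ≤ ∫ r in (0:ℝ)..L, H r := by
          refine intervalIntegral.integral_mono_on hL0.le
            (hcont2.abs.intervalIntegrable 0 L) (hHcont.intervalIntegrable 0 L) ?_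
          intro r _
          calc |⟪gradient f (x + r • θ) - gradient f x, θ⟫|
              ≤ ‖gradient f (x + r • θ) - gradient f x‖ * ‖θ‖ := abs_real_inner_le_norm _ _
            _ = H r := by rw [hθ1, mul_one]
  have hIoc : ENNReal.ofReal (∫ r in (0:ℝ)..L, H r)
      = ∫⁻ r in Set.Ioc (0:ℝ) L, ENNReal.ofReal (H r) := by
    rw [intervalIntegral.integral_of_le hL0.le,
      ← ofReal_integral_eq_lintegral_ofReal hHcont.integrableOn_Ioc
        (Filter.Eventually.of_forall fun r => norm_nonneg _)]
  -- Hölder / Cauchy–Schwarz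
  set A : ℝ → ENNReal := fun r => ENNReal.ofReal (r ^ ((1 + α) / 2)) with hA
  set B : ℝ → ENNReal := fun r => ENNReal.ofReal (H r * r ^ (-((1 + α) / 2))) with hB
  have hAmeas : Measurable A :=
    ENNReal.measurable_ofReal.comp (measurable_id.pow measurable_const)
  have hBmeas : Measurable B :=
    ENNReal.measurable_ofReal.comp
      (hHcont.measurable.mul (measurable_id.pow measurable_const))
  have hconj : Real.HolderConjugate 2 2 := Real.HolderConjugate.two_two
  have hAB : ∀ r ∈ Set.Ioc (0:ℝ) L, ENNReal.ofReal (H r) = (A * B) r := by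
    intro r hr
    have hr0 : 0 < r := hr.1
    have : r ^ ((1 + α) / 2) * r ^ (-((1 + α) / 2)) = 1 := by
      rw [← Real.rpow_add hr0]; simp
    simp only [hA, hB, Pi.mul_apply]
    rw [← ENNReal.ofReal_mul (Real.rpow_nonneg hr0.le _)]
    congr 1
    rw [← mul_assoc, mul_comm (r ^ ((1 + α) / 2)) (H r), mul_assoc, this, mul_one]
  have holder : ∫⁻ r in Set.Ioc (0:ℝ) L, ENNReal.ofReal (H r)
      ≤ (∫⁻ r in Set.Ioc (0:ℝ) L, A r ^ (2:ℝ)) ^ (1/2:ℝ)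
        * (∫⁻ r in Set.Ioc (0:ℝ) L, B r ^ (2:ℝ)) ^ (1/2:ℝ) := by
    rw [setLIntegral_congr_fun measurableSet_Ioc hAB]
    exact ENNReal.lintegral_mul_le_Lp_mul_Lq _ hconj hAmeas.aemeasurable hBmeas.aemeasurable
  -- compute the A-integral
  have hAint : ∫⁻ r in Set.Ioc (0:ℝ) L, A r ^ (2:ℝ)
      = ENNReal.ofReal (L ^ (2 + α) / (2 + α)) := by
    have h1 : ∀ r ∈ Set.Ioc (0:ℝ) L, A r ^ (2:ℝ) = ENNReal.ofReal (r ^ (1 + α)) := by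
      intro r hr
      show ENNReal.ofReal (r ^ ((1 + α) / 2)) ^ (2:ℝ) = ENNReal.ofReal (r ^ (1 + α))
      rw [ENNReal.ofReal_rpow_of_nonneg (Real.rpow_nonneg hr.1.le _) (by norm_num),
        ← Real.rpow_mul hr.1.le]
      norm_num
    rw [setLIntegral_congr_fun measurableSet_Ioc h1]
    have hint : IntervalIntegrable (fun r : ℝ => r ^ (1 + α)) volume 0 L :=
      intervalIntegral.intervalIntegrable_rpow' (by linarith)
    have hval : ∫ r in (0:ℝ)..L, r ^ (1 + α) = L ^ (2 + α) / (2 + α) := by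
      rw [_root_.integral_rpow (Or.inl (by linarith))]
      rw [Real.zero_rpow (by linarith)]
      ring_nf
    rw [← hval, intervalIntegral.integral_of_le hL0.le,
      ← ofReal_integral_eq_lintegral_ofReal]
    · exact hint.1
    · filter_upwards [self_mem_ae_restrict measurableSet_Ioc] with r hr
      exact Real.rpow_nonneg hr.1.le _
  -- compute the B-integrand
  have hBint : ∀ r ∈ Set.Ioc (0:ℝ) L, B r ^ (2:ℝ)
      = ENNReal.ofReal (H r ^ 2 * r ^ (-(1 + α))) := by
    intro r hr
    show ENNReal.ofReal (H r * r ^ (-((1 + α) / 2))) ^ (2:ℝ)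
        = ENNReal.ofReal (H r ^ 2 * r ^ (-(1 + α)))
    rw [ENNReal.ofReal_rpow_of_nonneg
      (mul_nonneg (norm_nonneg _) (Real.rpow_nonneg hr.1.le _)) (by norm_num)]
    congr 1
    rw [Real.mul_rpow (norm_nonneg _) (Real.rpow_nonneg hr.1.le _),
      ← Real.rpow_mul hr.1.le,
      show -((1 + α) / 2) * 2 = -(1 + α) by ring,
      show (2:ℝ) = ((2:ℕ):ℝ) from by norm_num, Real.rpow_natCast]
  -- constant identity
  have hconst : ENNReal.ofReal (L ^ (2 + α) / (2 + α)) ^ (1/2:ℝ)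
      = ENNReal.ofReal ((2 + α) ^ (-(1 / 2 : ℝ)) * L ^ (1 + α / 2)) := by
    rw [ENNReal.ofReal_rpow_of_nonneg (by positivity) (by norm_num)]
    congr 1
    rw [Real.div_rpow (Real.rpow_nonneg hL0.le _) (by linarith),
      ← Real.rpow_mul hL0.le]
    rw [div_eq_mul_inv, ← Real.rpow_neg_one ((2+α) ^ (1/2:ℝ)), ← Real.rpow_mul (by linarith)]
    ring_nf
  calc ENNReal.ofReal |f (x + z) - f x - ⟪gradient f x, z⟫|
      ≤ ENNReal.ofReal (∫ r in (0:ℝ)..L, H r) := ENNReal.ofReal_le_ofReal hbound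
    _ = ∫⁻ r in Set.Ioc (0:ℝ) L, ENNReal.ofReal (H r) := hIoc
    _ ≤ (∫⁻ r in Set.Ioc (0:ℝ) L, A r ^ (2:ℝ)) ^ (1/2:ℝ)
        * (∫⁻ r in Set.Ioc (0:ℝ) L, B r ^ (2:ℝ)) ^ (1/2:ℝ) := holder
    _ = ENNReal.ofReal ((2 + α) ^ (-(1 / 2 : ℝ)) * L ^ (1 + α / 2)) *
        (∫⁻ r in Set.Ioc (0:ℝ) L,
          ENNReal.ofReal (H r ^ 2 * r ^ (-(1 + α)))) ^ (1/2:ℝ) := by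
        rw [hAint, hconst,
          setLIntegral_congr_fun measurableSet_Ioc hBint]
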